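/- Let f : [0,∞) → ℝ be a differentiable, non-increasing, positive function with monotone hazard rate. Suppose 0 < x₁ < x₂ satisfy f(0) = √e · f(x₁) and f(0) ≤ e · f(x₂). Then x₂ ≤ 2·x₁. -/

import Mathlib

/-- MHR demand-drop lemma: if f(0) = √e·f(x₁) and f(0) ≤ e·f(x₂) for an MHR
non-increasing positive function f, then x₂ ≤ 2·x₁. -/
theorem mhr_demand_drop (f : ℝ → ℝ) (x₁ x₂ : ℝ)
    (hx₁ : 0 < x₁) (hx₁₂ : x₁ < x₂)
    (hcont : ContinuousOn f (Set.Icc 0 x₂))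
    (hdiff : ∀ x ∈ Set.Ioc (0:ℝ) x₂, DifferentiableAt ℝ f x)
    (hpos : ∀ x ∈ Set.Ioc (0:ℝ) x₂, 0 < f x)
    (hanti : ∀ x ∈ Set.Icc (0:ℝ) x₂, ∀ y ∈ Set.Icc (0:ℝ) x₂, x ≤ y → f y ≤ f x)
    (hmhr : ∀ x ∈ Set.Ioc (0:ℝ) x₂, ∀ y ∈ Set.Ioc (0:ℝ) x₂, x ≤ y →
      |deriv f x| / f x ≤ |deriv f y| / f y)
    (h1 : f 0 = Real.sqrt (Real.exp 1) * f x₁)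
    (h2 : f 0 ≤ Real.exp 1 * f x₂) :
    x₂ ≤ 2 * x₁ := by
  have hx₂ : (0:ℝ) < x₂ := hx₁.trans hx₁₂
  -- positivity on all of [0, x₂]
  have hposIcc : ∀ x ∈ Set.Icc (0:ℝ) x₂, 0 < f x := by
    intro x hx
    have h2pos : 0 < f x₂ := hpos x₂ ⟨hx₂, le_rfl⟩
    exact lt_of_lt_of_le h2pos (hanti x hx x₂ ⟨hx₂.le, le_rfl⟩ hx.2)
  set g : ℝ → ℝ := fun x => Real.log (f x) with hg
  have hgd : ∀ x ∈ Set.Ioo (0:ℝ) x₂, HasDerivAt g (deriv f x / f x) x := by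
    intro x hx
    have hxI : x ∈ Set.Ioc (0:ℝ) x₂ := ⟨hx.1, hx.2.le⟩
    have hfd : HasDerivAt f (deriv f x) x := (hdiff x hxI).hasDerivAt
    have := (Real.hasDerivAt_log (hpos x hxI).ne').comp x hfd
    have h' : deriv f x / f x = (f x)⁻¹ * deriv f x := by rw [div_eq_inv_mul]
    rw [h']; exact this
  have hgc : ContinuousOn g (Set.Icc 0 x₂) :=
    ContinuousOn.log hcont (fun x hx => (hposIcc x hx).ne')
  -- MVT on [0, x₁]
  obtain ⟨c, hc, hceq⟩ := exists_hasDerivAt_eq_slope g (fun x => deriv f x / f x) hx₁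
    (hgc.mono (Set.Icc_subset_Icc le_rfl hx₁₂.le))
    (fun x hx => hgd x ⟨hx.1, hx.2.trans hx₁₂⟩)
  -- MVT on [x₁, x₂]
  obtain ⟨d, hd, hdeq⟩ := exists_hasDerivAt_eq_slope g (fun x => deriv f x / f x) hx₁₂
    (hgc.mono (Set.Icc_subset_Icc hx₁.le le_rfl))
    (fun x hx => hgd x ⟨hx₁.trans hx.1, hx.2⟩)
  have hcI : c ∈ Set.Ioc (0:ℝ) x₂ := ⟨hc.1, hc.2.le.trans hx₁₂.le⟩
  have hdI : d ∈ Set.Ioc (0:ℝ) x₂ := ⟨hx₁.trans hd.1, hd.2.le⟩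
  have hfc : 0 < f c := hpos c hcI
  have hfd : 0 < f d := hpos d hdI
  have hf1 : 0 < f x₁ := hpos x₁ ⟨hx₁, hx₁₂.le⟩
  have hf2 : 0 < f x₂ := hpos x₂ ⟨hx₂, le_rfl⟩
  have hf0 : 0 < f 0 := hposIcc 0 ⟨le_rfl, hx₂.le⟩
  -- log relations
  have hlog1 : g 0 - g x₁ = 1/2 := by
    have hs : Real.log (Real.sqrt (Real.exp 1)) = 1/2 := by
      rw [Real.log_sqrt (Real.exp_pos 1).le, Real.log_exp]
    simp only [hg]
    rw [h1, Real.log_mul (by positivity) hf1.ne', hs]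
    ring
  have hlog2 : g 0 - g x₂ ≤ 1 := by
    have := Real.log_le_log hf0 h2
    have h' : Real.log (Real.exp 1 * f x₂) = 1 + Real.log (f x₂) := by
      rw [Real.log_mul (Real.exp_pos 1).ne' hf2.ne', Real.log_exp]
    simp only [hg]
    linarith [this, h'.symm.le]
  -- value of hazard at c
  have hderc : deriv f c / f c = -(1 / (2 * x₁)) := by
    rw [hceq, sub_zero, show g x₁ - g 0 = -(1/2) by linarith]
    rw [neg_div, div_div]
  -- deriv f d ≤ 0 from antitonicity
  have hdnp : deriv f d ≤ 0 := by
    have hfd' : HasDerivAt f (deriv f d) d := (hdiff d hdI).hasDerivAt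
    have htend : Filter.Tendsto (slope f d) (nhdsWithin d (Set.Ioi d)) (nhds (deriv f d)) :=
      (hasDerivAt_iff_tendsto_slope.mp hfd').mono_left
        (nhdsWithin_mono d (fun y hy => Set.mem_compl_singleton_iff.mpr (ne_of_gt hy)))
    refine le_of_tendsto htend ?_
    filter_upwards [Ioo_mem_nhdsGT_of_mem ⟨le_rfl, hd.2⟩] with y hy
    have hyI : y ∈ Set.Icc (0:ℝ) x₂ := ⟨(hdI.1.trans hy.1).le, hy.2.le⟩
    have hdIcc : d ∈ Set.Icc (0:ℝ) x₂ := ⟨hdI.1.le, hdI.2⟩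
    have : f y ≤ f d := hanti d hdIcc y hyI hy.1.le
    rw [slope_def_field]
    have hyd : 0 < y - d := sub_pos.mpr hy.1
    apply div_nonpos_of_nonpos_of_nonneg <;> [linarith; linarith]
  -- hazard comparison
  have hmono := hmhr c hcI d hdI (hc.2.trans hd.1).le
  have habsc : |deriv f c| / f c = 1 / (2 * x₁) := by
    rw [show f c = |f c| from (abs_of_pos hfc).symm, ← abs_div, hderc, abs_neg,
      abs_of_pos (by positivity : (0:ℝ) < 1 / (2 * x₁))]
  have habsd : |deriv f d| / f d = (g x₁ - g x₂) / (x₂ - x₁) := by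
    rw [abs_of_nonpos hdnp, neg_div, hdeq, ← neg_div]
    ring_nf
  rw [habsc, habsd] at hmono
  -- combine
  have hub : (g x₁ - g x₂) ≤ 1/2 := by linarith
  have h21 : (0:ℝ) < x₂ - x₁ := by linarith
  have := (div_le_div_iff₀ (by positivity) h21).mp hmono
  -- 1/(2x₁) * (x₂ - x₁) ≤ g x₁ - g x₂ ≤ 1/2 ... need careful
  have : 1 * (x₂ - x₁) ≤ (g x₁ - g x₂) * (2 * x₁) := this
  nlinarith [hub, hx₁]
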